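/- Let f be a log-concave density with CDF F and let Γ_G(b) denote the unique solution a of a + π^R = (F(b) - F(a))/f(a) for a < b. Then the derivative of Γ_G with respect to b is strictly less than 1; equivalently, b ↦ Γ_G(b) - (b - 2π^R) is strictly decreasing. -/

import Mathlib

open MeasureTheory intervalIntegral

/-- Log-concavity in "quadrant" form: `f(y+s) f(x) ≤ f(y) f(x+s)` for `x ≤ y`, `s > 0`. -/
lemma logconcave_quad (f : ℝ → ℝ) (S : Set ℝ)
    (hpos : ∀ x ∈ S, 0 < f x)
    (hlc : ConcaveOn ℝ S (fun x => Real.log (f x)))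
    {x y s : ℝ} (hx : x ∈ S) (hy : y ∈ S) (hxs : x + s ∈ S) (hys : y + s ∈ S)
    (hxy : x ≤ y) (hs : 0 < s) :
    f (y + s) * f x ≤ f y * f (x + s) := by
  set D : ℝ := y + s - x with hD
  have hD0 : 0 < D := by simp only [hD]; linarith
  set μ : ℝ := s / D with hμ
  set ν : ℝ := (y - x) / D with hν
  have hμ0 : 0 ≤ μ := div_nonneg hs.le hD0.le
  have hν0 : 0 ≤ ν := div_nonneg (by linarith) hD0.le
  have hsum : ν + μ = 1 := by
    rw [hν, hμ, ← add_div, div_eq_one_iff_eq hD0.ne', hD]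
    ring
  have h1 := hlc.2 hx hys hν0 hμ0 hsum
  have h2 := hlc.2 hx hys hμ0 hν0 (by linarith)
  have hpt1 : ν • x + μ • (y + s) = x + s := by
    simp only [smul_eq_mul, hν, hμ]
    field_simp
    ring
  have hpt2 : μ • x + ν • (y + s) = y := by
    simp only [smul_eq_mul, hν, hμ]
    field_simp
    ring
  rw [hpt1] at h1
  rw [hpt2] at h2
  simp only [smul_eq_mul] at h1 h2
  have hlog : Real.log (f (y + s)) + Real.log (f x) ≤
      Real.log (f y) + Real.log (f (x + s)) := by
    have hν1 : ν = 1 - μ := by linarith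
    rw [hν1] at h1 h2
    linarith
  have h3 : Real.exp (Real.log (f (y + s)) + Real.log (f x)) ≤
      Real.exp (Real.log (f y) + Real.log (f (x + s))) := Real.exp_le_exp.mpr hlog
  rwa [Real.exp_add, Real.exp_add, Real.exp_log (hpos _ hys), Real.exp_log (hpos _ hx),
    Real.exp_log (hpos _ hy), Real.exp_log (hpos _ hxs)] at h3

/-- Let `f` be a strictly positive, continuously differentiable, log-concave
density on its (convex) support `S`, with CDF `F`, and let `Γ` denote the map
`b ↦ Γ_G(b)`, the unique solution `a < b` of `a + π^R = (F b - F a)/f a`.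
Then `b ↦ Γ_G(b) - (b - 2π^R)` is strictly decreasing (equivalently,
`Γ_G' < 1`). -/
theorem stmt5 (f F : ℝ → ℝ) (S : Set ℝ) (hS : Convex ℝ S)
    (hf : ContDiff ℝ 1 f) (hpos : ∀ x ∈ S, 0 < f x) (hf0 : ∀ x, 0 ≤ f x)
    (hint : MeasureTheory.Integrable f) (hnorm : ∫ x, f x = 1)
    (hlc : ConcaveOn ℝ S (fun x => Real.log (f x)))
    (hF : ∀ x, F x = ∫ t in Set.Iic x, f t)
    (π : ℝ) (hπ : 0 < π) (Γ : ℝ → ℝ)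
    (hΓ : ∀ b ∈ S, -π < b →
      Γ b ∈ S ∧ Γ b < b ∧ Γ b + π = (F b - F (Γ b)) / f (Γ b)) :
    ∀ b₁ ∈ S, ∀ b₂ ∈ S, -π < b₁ → b₁ < b₂ →
      Γ b₂ - (b₂ - 2 * π) < Γ b₁ - (b₁ - 2 * π) := by
  intro b₁ hb₁ b₂ hb₂ hπb₁ hb₁₂
  by_contra hcon
  push_neg at hcon
  obtain ⟨ha₁S, ha₁b, heq₁⟩ := hΓ b₁ hb₁ hπb₁
  obtain ⟨ha₂S, ha₂b, heq₂⟩ := hΓ b₂ hb₂ (by linarith)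
  set a₁ : ℝ := Γ b₁
  set a₂ : ℝ := Γ b₂
  -- from hcon : a₂ - a₁ ≥ b₂ - b₁ > 0
  have hscon : b₂ - b₁ ≤ a₂ - a₁ := by linarith
  set s : ℝ := a₂ - a₁ with hs_def
  have hs : 0 < s := by linarith
  have ha₂eq : a₂ = a₁ + s := by ring
  have hcontf : Continuous f := hf.continuous
  have hFdiff : ∀ u v : ℝ, F v - F u = ∫ t in u..v, f t := by
    intro u v
    rw [hF, hF, integral_Iic_sub_Iic hint.integrableOn hint.integrableOn]
  have hIcc : Set.Icc a₁ b₁ ⊆ S := hS.ordConnected.out ha₁S hb₁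
  have hIcc₂ : Set.Icc a₂ b₂ ⊆ S := hS.ordConnected.out ha₂S hb₂
  have hfa₁ : 0 < f a₁ := hpos _ ha₁S
  have hfa₂ : 0 < f a₂ := hpos _ ha₂S
  -- rewrite Γ equations
  have heq₁' : F b₁ - F a₁ = (a₁ + π) * f a₁ := by
    field_simp at heq₁
    linarith [heq₁]
  have heq₂' : F b₂ - F a₂ = (a₂ + π) * f a₂ := by
    field_simp at heq₂
    linarith [heq₂]
  -- bounds on endpoints
  have hub : b₂ - s ≤ b₁ := by linarith
  have hlb : a₁ ≤ b₂ - s := by linarith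
  -- pointwise inequality
  have hptwise : ∀ t ∈ Set.Icc a₁ (b₂ - s), f (t + s) ≤ f a₂ / f a₁ * f t := by
    intro t ht
    have htS : t ∈ S := hIcc ⟨ht.1, le_trans ht.2 hub⟩
    have htsS : t + s ∈ S := hIcc₂ ⟨by linarith [ht.1], by linarith [ht.2]⟩
    have := logconcave_quad f S hpos hlc ha₁S htS (ha₂eq ▸ ha₂S) htsS ht.1 hs
    rw [div_mul_eq_mul_div, le_div_iff₀ hfa₁]
    calc f (t + s) * f a₁ ≤ f t * f (a₁ + s) := this
      _ = f a₂ * f t := by rw [← ha₂eq]; ring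
  -- integral manipulations
  have hint1 : IntervalIntegrable (fun t => f (t + s)) volume a₁ (b₂ - s) :=
    (hcontf.comp (continuous_id.add continuous_const)).intervalIntegrable _ _
  have hint2 : IntervalIntegrable (fun t => f a₂ / f a₁ * f t) volume a₁ (b₂ - s) :=
    (continuous_const.mul hcontf).intervalIntegrable _ _
  have step1 : (∫ t in a₂..b₂, f t) = ∫ t in a₁..(b₂ - s), f (t + s) := by
    rw [intervalIntegral.integral_comp_add_right]
    congr 1 <;> ring
  have step2 : (∫ t in a₁..(b₂ - s), f (t + s)) ≤ ∫ t in a₁..(b₂ - s), f a₂ / f a₁ * f t :=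
    intervalIntegral.integral_mono_on hlb hint1 hint2 hptwise
  have step3 : (∫ t in a₁..(b₂ - s), f a₂ / f a₁ * f t) =
      f a₂ / f a₁ * ∫ t in a₁..(b₂ - s), f t := intervalIntegral.integral_const_mul _ _
  have step4 : (∫ t in a₁..(b₂ - s), f t) ≤ ∫ t in a₁..b₁, f t := by
    have hsplit : (∫ t in a₁..(b₂ - s), f t) + ∫ t in (b₂ - s)..b₁, f t = ∫ t in a₁..b₁, f t :=
      intervalIntegral.integral_add_adjacent_intervals
        (hcontf.intervalIntegrable _ _) (hcontf.intervalIntegrable _ _)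
    have hnn : 0 ≤ ∫ t in (b₂ - s)..b₁, f t :=
      intervalIntegral.integral_nonneg hub (fun u _ => hf0 u)
    linarith
  have hratio : 0 ≤ f a₂ / f a₁ := le_of_lt (div_pos hfa₂ hfa₁)
  have chain : (a₂ + π) * f a₂ ≤ (a₁ + π) * f a₂ := by
    have h5 : (a₂ + π) * f a₂ ≤ f a₂ / f a₁ * ∫ t in a₁..b₁, f t := by
      rw [← heq₂', hFdiff, step1]
      calc (∫ t in a₁..(b₂ - s), f (t + s)) ≤ ∫ t in a₁..(b₂ - s), f a₂ / f a₁ * f t := step2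
        _ = f a₂ / f a₁ * ∫ t in a₁..(b₂ - s), f t := step3
        _ ≤ f a₂ / f a₁ * ∫ t in a₁..b₁, f t := by
            exact mul_le_mul_of_nonneg_left step4 hratio
    have h6 : f a₂ / f a₁ * ∫ t in a₁..b₁, f t = (a₁ + π) * f a₂ := by
      rw [← hFdiff, heq₁']
      field_simp
    linarith
  have : a₂ + π ≤ a₁ + π := le_of_mul_le_mul_right chain hfa₂
  linarith
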